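/- arXiv:2601.12461 — 3 statements merged into one kernel-verified Lean document; each statement's English description precedes it below -/
import Mathlib

section
/- For real numbers a, b and parameters n ≥ 4 and γ ≥ √(n-3)/2, the quadratic form ((n-2)/(n-3)·γ − 1)·a² + (2γ/(n-3) − 1)·a·b + (γ/(n-3))·b² is nonnegative. -/
/-- The quadratic form underlying the estimate `V₁ ≥ 0`: for `n ≥ 4` and
`γ ≥ √(n-3)/2`, the form `((n-2)/(n-3)·γ − 1)a² + (2γ/(n-3) − 1)ab + (γ/(n-3))b²`
is nonnegative for all real `a, b`. -/
theorem quadratic_form_nonneg (n : ℕ) (hn : 4 ≤ n) (γ a b : ℝ)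
    (hγ : Real.sqrt ((n : ℝ) - 3) / 2 ≤ γ) :
    0 ≤ (((n : ℝ) - 2) / ((n : ℝ) - 3) * γ - 1) * a ^ 2
        + (2 * γ / ((n : ℝ) - 3) - 1) * (a * b)
        + γ / ((n : ℝ) - 3) * b ^ 2 := by
  set m : ℝ := (n : ℝ) - 3 with hm
  have hm1 : 1 ≤ m := by
    have : (4 : ℝ) ≤ (n : ℝ) := by exact_mod_cast hn
    simp only [hm]; linarith
  have hm0 : 0 < m := by linarith
  have hs : Real.sqrt m ^ 2 = m := Real.sq_sqrt (by linarith)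
  have hs1 : 1 ≤ Real.sqrt m := by
    nlinarith [Real.sqrt_nonneg m]
  have hγ0 : (1:ℝ)/2 ≤ γ := by linarith
  have hγ2 : m ≤ 4 * γ ^ 2 := by nlinarith [Real.sqrt_nonneg m]
  have key : 0 ≤ ((m + 1) * γ - m) * a ^ 2 + (2 * γ - m) * (a * b) + γ * b ^ 2 := by
    nlinarith [sq_nonneg (2 * γ * b + (2 * γ - m) * a), sq_nonneg a, mul_pos hm0 hm0,
      mul_nonneg (sq_nonneg a) (le_of_lt hm0)]
  have hn2 : ((n : ℝ) - 2) = m + 1 := by simp [hm]; ring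
  rw [hn2]
  have := div_nonneg key (le_of_lt hm0)
  calc (0:ℝ) ≤ (((m + 1) * γ - m) * a ^ 2 + (2 * γ - m) * (a * b) + γ * b ^ 2) / m := this
    _ = (m + 1) / m * γ * a ^ 2 + (2 * γ / m - 1) * (a * b) + γ / m * b ^ 2 - a ^2 + (m/m) * (a*b) - (a*b) := by
        field_simp; ring
    _ = ((m + 1) / m * γ - 1) * a ^ 2 + (2 * γ / m - 1) * (a * b) + γ / m * b ^ 2 := by
        rw [div_self (ne_of_gt hm0)]; ring
end

section
/- Let n ≥ 4, let γ be a real with √(n-3)/2 ≤ γ, and let λ₃, ..., λ_n be real numbers with H = λ₃ + ... + λ_n. Then γ·∑_{j=3}^n λ_j² + ∑_{j=4}^n λ₃·λ_j ≥ 0. -/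
/-- The inequality `V₂ ≥ 0`: for `n ≥ 4`, `γ ≥ √(n-3)/2`, and real numbers
`λ₃, …, λ_n` with sum `H`, one has `γ·∑_{j=3}^n λ_j² + ∑_{j=4}^n λ₃·λ_j ≥ 0`. -/
theorem V2_nonneg (n : ℕ) (hn : 4 ≤ n) (γ : ℝ)
    (hγ : Real.sqrt ((n : ℝ) - 3) / 2 ≤ γ)
    (lam : ℕ → ℝ) (H : ℝ) (hH : H = ∑ j ∈ Finset.Icc 3 n, lam j) :
    0 ≤ γ * ∑ j ∈ Finset.Icc 3 n, (lam j) ^ 2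
        + ∑ j ∈ Finset.Icc 4 n, lam 3 * lam j := by
  have hn' : (4:ℝ) ≤ (n:ℝ) := by exact_mod_cast hn
  have hm1 : (1:ℝ) ≤ (n:ℝ) - 3 := by linarith
  have hm0 : (0:ℝ) ≤ (n:ℝ) - 3 := by linarith
  have h1 : (1:ℝ) ≤ Real.sqrt ((n:ℝ) - 3) := by
    rw [show (1:ℝ) = Real.sqrt 1 by simp]
    exact Real.sqrt_le_sqrt hm1
  have hγ1 : (1:ℝ)/2 ≤ γ := by linarith
  have hsq : Real.sqrt ((n:ℝ) - 3) ^ 2 = (n:ℝ) - 3 := Real.sq_sqrt hm0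
  have hγsq : (n:ℝ) - 3 ≤ 4 * γ ^ 2 := by nlinarith [Real.sqrt_nonneg ((n:ℝ) - 3)]
  have hins : Finset.Icc 3 n = insert 3 (Finset.Icc 4 n) := by
    ext x; simp [Finset.mem_Icc, Finset.mem_insert]; omega
  have hnotmem : 3 ∉ Finset.Icc 4 n := by simp
  set a := lam 3 with ha
  set t := ∑ j ∈ Finset.Icc 4 n, lam j with ht
  set Q := ∑ j ∈ Finset.Icc 4 n, (lam j) ^ 2 with hQdef
  have hsum1 : ∑ j ∈ Finset.Icc 3 n, (lam j) ^ 2 = a ^ 2 + Q := by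
    rw [hins, Finset.sum_insert hnotmem]
  have hsum2 : ∑ j ∈ Finset.Icc 4 n, lam 3 * lam j = a * t := by
    rw [← Finset.mul_sum]
  have hcard : ((Finset.Icc 4 n).card : ℝ) = (n:ℝ) - 3 := by
    rw [Nat.card_Icc]
    have : n + 1 - 4 = n - 3 := by omega
    rw [this]
    have : (3:ℕ) ≤ n := by omega
    push_cast [Nat.cast_sub this]
    ring
  have hCS : t ^ 2 ≤ ((n:ℝ) - 3) * Q := by
    have := sq_sum_le_card_mul_sum_sq (s := Finset.Icc 4 n) (f := lam)
    rw [hcard] at this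
    exact this
  have hQ0 : (0:ℝ) ≤ Q := Finset.sum_nonneg fun i _ => sq_nonneg _
  rw [hsum1, hsum2]
  nlinarith [sq_nonneg (2 * γ * a + t), mul_nonneg (by linarith : (0:ℝ) ≤ 4 * γ ^ 2 - ((n:ℝ) - 3)) hQ0]
end

section
/- Let a, b, c be vectors in an inner product space (representing ∇log ρ₁, ∇log ρ₂, ∇log ω₂ on Σ₂ with b = a + c), let H be a real number, and suppose |∇_{Σ₁} log ρ₁|² = |a|² + H² (decomposition into tangential and normal parts). Then for 0 < γ ≤ 3(n-1)/(4(n-2)) with n ≥ 4: γ²·((n-2)/(n-1))·|b|² − γ·(|a|² + H²) − γ·⟨b, b − a⟩ ≤ −γ·H². -/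
open scoped RealInnerProductSpace

/-- Gradient-term estimate (es0): with `a = ∇_{Σ₂} log ρ₁`, `b = ∇_{Σ₂} log ρ₂`,
`c = ∇_{Σ₂} log ω₂`, `b = a + c`, mean curvature `H` (so `|∇_{Σ₁} log ρ₁|² = |a|² + H²`),
and `0 < γ ≤ 3(n-1)/(4(n-2))` with `n ≥ 4`:
`γ²((n-2)/(n-1))|b|² − γ(|a|² + H²) − γ⟨b, b − a⟩ ≤ −γH²`. -/
theorem gradient_term_estimate {E : Type*} [NormedAddCommGroup E] [InnerProductSpace ℝ E]
    (a b c : E) (hb : b = a + c) (H : ℝ) (n : ℕ) (hn : 4 ≤ n)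
    (γ : ℝ) (hγ0 : 0 < γ) (hγ : γ ≤ 3 * ((n : ℝ) - 1) / (4 * ((n : ℝ) - 2))) :
    γ ^ 2 * (((n : ℝ) - 2) / ((n : ℝ) - 1)) * ‖b‖ ^ 2
      - γ * (‖a‖ ^ 2 + H ^ 2) - γ * ⟪b, b - a⟫ ≤ -γ * H ^ 2 := by
  have hx : (4 : ℝ) ≤ (n : ℝ) := by exact_mod_cast hn
  have h1 : (0 : ℝ) < (n : ℝ) - 1 := by linarith
  have h2 : (0 : ℝ) < (n : ℝ) - 2 := by linarith
  -- γ * ((n-2)/(n-1)) ≤ 3/4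
  have hcoef : γ * (((n : ℝ) - 2) / ((n : ℝ) - 1)) ≤ 3 / 4 := by
    rw [le_div_iff₀ (by positivity)] at hγ
    rw [← mul_div_assoc, div_le_div_iff₀ h1 (by norm_num)]
    nlinarith
  have hinner : ⟪b, b - a⟫ = ‖b‖ ^ 2 - ⟪b, a⟫ := by
    rw [inner_sub_right, real_inner_self_eq_norm_sq]
  have hba : ⟪b, a⟫ ≤ ‖a‖ ^ 2 + ‖b‖ ^ 2 / 4 := by
    have h := real_inner_le_norm b a
    nlinarith [sq_nonneg (‖b‖ / 2 - ‖a‖)]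
  rw [hinner]
  have hb2 : (0 : ℝ) ≤ ‖b‖ ^ 2 := by positivity
  nlinarith [mul_le_mul_of_nonneg_right hcoef hb2,
    mul_le_mul_of_nonneg_left hba hγ0.le]
end
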